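/- The quotient of Inj(n × ω, ω) by the equivalence relation generated by precomposition with maps f_1 ⊔ ... ⊔ f_n for arbitrary f_1, ..., f_n ∈ M consists of a single equivalence class; i.e., any two injections n × ω → ω are related. -/
import Mathlib


/-- The monoid of injective self-maps of ω (modelled as ℕ), under composition. -/
def M : Submonoid (Function.End ℕ) where
  carrier := {f | Function.Injective f}
  mul_mem' := fun hf hg => hf.comp hg
  one_mem' := fun _ _ h => h

/-- `x` is supported on `A` if it is fixed by every injection fixing `A` pointwise. -/
def Supported {X : Type*} [MulAction M X] (A : Set ℕ) (x : X) : Prop :=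
  ∀ u : M, (∀ a ∈ A, u.1 a = a) → u • x = x

namespace Stmt17

abbrev Inj (n : ℕ) := {φ : Fin n × ℕ → ℕ // Function.Injective φ}

def r {n : ℕ} (φ ψ : Inj n) : Prop :=
  ∃ f : Fin n → M, ψ.1 = fun p => φ.1 (p.1, (f p.1).1 p.2)

variable {n : ℕ}

theorem fiber_inj (φ : Inj n) (i : Fin n) : Function.Injective fun k => φ.1 (i, k) :=
  fun _ _ h => congrArg Prod.snd (φ.2 h)

/-- The range of the `i`-th fiber of `φ`. -/
def Rg (φ : Inj n) (i : Fin n) : Set ℕ := Set.range fun k => φ.1 (i, k)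

theorem Rg_infinite (φ : Inj n) (i : Fin n) : (Rg φ i).Infinite :=
  Set.infinite_range_of_injective (fiber_inj φ i)

/-- Pick an element of `Rg φ i` greater than `m`. -/
noncomputable def pick (φ : Inj n) (i : Fin n) (m : ℕ) : ℕ :=
  ((Rg_infinite φ i).exists_gt m).choose

theorem pick_mem (φ : Inj n) (i : Fin n) (m : ℕ) : pick φ i m ∈ Rg φ i :=
  ((Rg_infinite φ i).exists_gt m).choose_spec.1

theorem pick_gt (φ : Inj n) (i : Fin n) (m : ℕ) : m < pick φ i m :=
  ((Rg_infinite φ i).exists_gt m).choose_spec.2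

variable (φ ψ : Inj n)

/-- Increasing sequence of thresholds. -/
noncomputable def s : ℕ → ℕ
  | 0 => 0
  | k+1 => max (s k + 1)
      (Finset.univ.sup fun i : Fin n => max (pick φ i (s k)) (pick ψ i (s k)))

theorem s_lt_succ (k : ℕ) : s φ ψ k < s φ ψ (k+1) :=
  lt_of_lt_of_le (Nat.lt_succ_self _) (le_max_left _ _)

theorem s_mono : StrictMono (s φ ψ) :=
  strictMono_nat_of_lt_succ (s_lt_succ φ ψ)

theorem pickφ_le (i : Fin n) (k : ℕ) : pick φ i (s φ ψ k) ≤ s φ ψ (k+1) := by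
  show pick φ i (s φ ψ k) ≤ max _ _
  refine le_trans (le_trans (le_max_left _ (pick ψ i (s φ ψ k))) ?_) (le_max_right _ _)
  exact Finset.le_sup (f := fun j : Fin n => max (pick φ j (s φ ψ k)) (pick ψ j (s φ ψ k)))
    (Finset.mem_univ i)

theorem pickψ_le (i : Fin n) (k : ℕ) : pick ψ i (s φ ψ k) ≤ s φ ψ (k+1) := by
  show pick ψ i (s φ ψ k) ≤ max _ _
  refine le_trans (le_trans (le_max_right (pick φ i (s φ ψ k)) _) ?_) (le_max_right _ _)
  exact Finset.le_sup (f := fun j : Fin n => max (pick φ j (s φ ψ k)) (pick ψ j (s φ ψ k)))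
    (Finset.mem_univ i)

noncomputable def a (i : Fin n) (k : ℕ) : ℕ := pick φ i (s φ ψ (2*k))
noncomputable def b (i : Fin n) (k : ℕ) : ℕ := pick ψ i (s φ ψ (2*k+1))

noncomputable def c (i : Fin n) (m : ℕ) : ℕ :=
  if m % 2 = 0 then a φ ψ i (m/2) else b φ ψ i (m/2)

theorem c_bounds (i : Fin n) (m : ℕ) : s φ ψ m < c φ ψ i m ∧ c φ ψ i m ≤ s φ ψ (m+1) := by
  unfold c
  rcases Nat.even_or_odd m with ⟨t, ht⟩ | ⟨t, ht⟩
  · have h0 : m % 2 = 0 := by omega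
    have h1 : m / 2 = t := by omega
    rw [if_pos h0, h1]
    have h2 : 2 * t = m := by omega
    constructor
    · rw [a, h2]; exact pick_gt φ i _
    · rw [a, ← h2]
      exact pickφ_le φ ψ i (2*t)
  · have h0 : ¬ (m % 2 = 0) := by omega
    have h1 : m / 2 = t := by omega
    rw [if_neg h0, h1]
    have h2 : 2 * t + 1 = m := by omega
    constructor
    · rw [b, h2]; exact pick_gt ψ i _
    · rw [b, ← h2]
      exact pickψ_le φ ψ i (2*t+1)

theorem c_lt_c {i j : Fin n} {m l : ℕ} (h : m < l) : c φ ψ i m < c φ ψ j l :=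
  lt_of_le_of_lt (le_trans (c_bounds φ ψ i m).2 ((s_mono φ ψ).monotone h))
    (c_bounds φ ψ j l).1

theorem c_mem_even (i : Fin n) (m : ℕ) (h : m % 2 = 0) : c φ ψ i m ∈ Rg φ i := by
  rw [c, if_pos h]; exact pick_mem φ i _

theorem c_mem_odd (i : Fin n) (m : ℕ) (h : ¬ m % 2 = 0) : c φ ψ i m ∈ Rg ψ i := by
  rw [c, if_neg h]; exact pick_mem ψ i _

theorem Φinj : Function.Injective (fun p : Fin n × ℕ => c φ ψ p.1 p.2) := by
  rintro ⟨i, m⟩ ⟨j, l⟩ h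
  simp only at h
  have hml : m = l := by
    rcases lt_trichotomy m l with hlt | heq | hlt
    · exact absurd h (ne_of_lt (c_lt_c φ ψ hlt))
    · exact heq
    · exact absurd h.symm (ne_of_lt (c_lt_c φ ψ hlt))
  subst hml
  have hij : i = j := by
    by_cases hp : m % 2 = 0
    · obtain ⟨x, hx⟩ := c_mem_even φ ψ i m hp
      obtain ⟨y, hy⟩ := c_mem_even φ ψ j m hp
      have : φ.1 (i, x) = φ.1 (j, y) := hx.trans (h.trans hy.symm)
      exact congrArg Prod.fst (φ.2 this)
    · obtain ⟨x, hx⟩ := c_mem_odd φ ψ i m hp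
      obtain ⟨y, hy⟩ := c_mem_odd φ ψ j m hp
      have : ψ.1 (i, x) = ψ.1 (j, y) := hx.trans (h.trans hy.symm)
      exact congrArg Prod.fst (ψ.2 this)
  rw [hij]

noncomputable def Φ : Inj n := ⟨fun p => c φ ψ p.1 p.2, Φinj φ ψ⟩

theorem c_even (i : Fin n) (k : ℕ) : c φ ψ i (2*k) = a φ ψ i k := by
  have h0 : (2*k) % 2 = 0 := by omega
  have h1 : (2*k) / 2 = k := by omega
  rw [c, if_pos h0, h1]

theorem c_odd (i : Fin n) (k : ℕ) : c φ ψ i (2*k+1) = b φ ψ i k := by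
  have h0 : ¬ ((2*k+1) % 2 = 0) := by omega
  have h1 : (2*k+1) / 2 = k := by omega
  rw [c, if_neg h0, h1]

noncomputable def φa : Inj n :=
  ⟨fun p => a φ ψ p.1 p.2, by
    have : (fun p : Fin n × ℕ => a φ ψ p.1 p.2)
        = (fun p : Fin n × ℕ => c φ ψ p.1 p.2) ∘ (fun p => (p.1, 2 * p.2)) := by
      funext p; exact (c_even φ ψ p.1 p.2).symm
    rw [this]
    exact (Φinj φ ψ).comp fun p q h => by
      simp only [Prod.mk.injEq] at h
      exact Prod.ext h.1 (by omega)⟩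

noncomputable def ψb : Inj n :=
  ⟨fun p => b φ ψ p.1 p.2, by
    have : (fun p : Fin n × ℕ => b φ ψ p.1 p.2)
        = (fun p : Fin n × ℕ => c φ ψ p.1 p.2) ∘ (fun p => (p.1, 2 * p.2 + 1)) := by
      funext p; exact (c_odd φ ψ p.1 p.2).symm
    rw [this]
    exact (Φinj φ ψ).comp fun p q h => by
      simp only [Prod.mk.injEq] at h
      exact Prod.ext h.1 (by omega)⟩

theorem r_Φ_φa : r (Φ φ ψ) (φa φ ψ) := by
  refine ⟨fun _ => ⟨(fun k => 2 * k : Function.End ℕ), fun k l h => by simp only at h; omega⟩, ?_⟩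
  funext p
  exact (c_even φ ψ p.1 p.2).symm

theorem r_Φ_ψb : r (Φ φ ψ) (ψb φ ψ) := by
  refine ⟨fun _ => ⟨(fun k => 2 * k + 1 : Function.End ℕ), fun k l h => by simp only at h; omega⟩, ?_⟩
  funext p
  exact (c_odd φ ψ p.1 p.2).symm

theorem a_strictMono (i : Fin n) : StrictMono (a φ ψ i) := fun k l h => by
  have h1 : a φ ψ i k ≤ s φ ψ (2*k+1) := pickφ_le φ ψ i (2*k)
  have h2 : s φ ψ (2*l) < a φ ψ i l := pick_gt φ i _
  have h3 : s φ ψ (2*k+1) ≤ s φ ψ (2*l) := (s_mono φ ψ).monotone (by omega)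
  omega

theorem b_strictMono (i : Fin n) : StrictMono (b φ ψ i) := fun k l h => by
  have h1 : b φ ψ i k ≤ s φ ψ (2*k+2) := pickψ_le φ ψ i (2*k+1)
  have h2 : s φ ψ (2*l+1) < b φ ψ i l := pick_gt ψ i _
  have h3 : s φ ψ (2*k+2) ≤ s φ ψ (2*l+1) := (s_mono φ ψ).monotone (by omega)
  omega

theorem r_φ_φa : r φ (φa φ ψ) := by
  have hmem : ∀ (i : Fin n) (k : ℕ), ∃ x, φ.1 (i, x) = a φ ψ i k := fun i k =>
    pick_mem φ i (s φ ψ (2*k))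
  choose g hg using hmem
  refine ⟨fun i => ⟨(g i : Function.End ℕ), fun k l h => ?_⟩, ?_⟩
  · have : a φ ψ i k = a φ ψ i l := by rw [← hg i k, ← hg i l]; exact congrArg (fun x => φ.1 (i, x)) h
    exact (a_strictMono φ ψ i).injective this
  · funext p
    exact (hg p.1 p.2).symm

theorem r_ψ_ψb : r ψ (ψb φ ψ) := by
  have hmem : ∀ (i : Fin n) (k : ℕ), ∃ x, ψ.1 (i, x) = b φ ψ i k := fun i k =>
    pick_mem ψ i (s φ ψ (2*k+1))
  choose g hg using hmem
  refine ⟨fun i => ⟨(g i : Function.End ℕ), fun k l h => ?_⟩, ?_⟩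
  · have : b φ ψ i k = b φ ψ i l := by rw [← hg i k, ← hg i l]; exact congrArg (fun x => ψ.1 (i, x)) h
    exact (b_strictMono φ ψ i).injective this
  · funext p
    exact (hg p.1 p.2).symm

end Stmt17

theorem stmt_17 (n : ℕ) (φ ψ : {φ : Fin n × ℕ → ℕ // Function.Injective φ}) :
    Relation.EqvGen
      (fun φ ψ : {φ : Fin n × ℕ → ℕ // Function.Injective φ} =>
        ∃ f : Fin n → M, ψ.1 = fun p => φ.1 (p.1, (f p.1).1 p.2)) φ ψ := by
  open Stmt17 in
  exact Relation.EqvGen.trans _ _ _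
    (Relation.EqvGen.rel _ _ (r_φ_φa φ ψ))
    (Relation.EqvGen.trans _ _ _
      (Relation.EqvGen.symm _ _ (Relation.EqvGen.rel _ _ (r_Φ_φa φ ψ)))
      (Relation.EqvGen.trans _ _ _
        (Relation.EqvGen.rel _ _ (r_Φ_ψb φ ψ))
        (Relation.EqvGen.symm _ _ (Relation.EqvGen.rel _ _ (r_ψ_ψb φ ψ)))))
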